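/- Let a > 0, α > 0, δ > 0, and let g₁ : (0,2) → (0,∞) satisfy g₁(t) = a·t^α + q(t) with q ∈ Q_{α,α}. Then the function t ↦ g₁(t)^δ − a^δ·t^{αδ}, defined on (0,2), belongs to Q_{αδ, αδ}. -/

import Mathlib

open Set

noncomputable section

/-- `P_{α,β}`: finite sums of real powers `t^{α_i}` on `(0,2)`, where integer exponents
exceed `α` and non-integer exponents exceed `β`. -/
def Pclass (α β : ℝ) : Set (ℝ → ℝ) :=
  { f | ∃ (n : ℕ) (a : Fin n → ℝ) (e : Fin n → ℝ),
      (∀ i, (∃ z : ℤ, e i = (z : ℝ)) → α < e i) ∧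
      (∀ i, (¬ ∃ z : ℤ, e i = (z : ℝ)) → β < e i) ∧
      (∀ t ∈ Set.Ioo (0 : ℝ) 2, f t = ∑ i, a i * t ^ (e i)) }

/-- `R_{γ'}`: functions that are `C^∞` on `(0,2)` and whose `m`-th derivatives are
`O(t^{γ'-m})` as `t ↓ 0`. -/
def Rclass (γ' : ℝ) : Set (ℝ → ℝ) :=
  { f | ContDiffOn ℝ (⊤ : ℕ∞) f (Set.Ioo (0 : ℝ) 2) ∧
      ∀ m : ℕ, ∃ C : ℝ, ∃ ε > (0 : ℝ), ∀ t ∈ Set.Ioo (0 : ℝ) (min ε 2),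
        |iteratedDerivWithin m f (Set.Ioo (0 : ℝ) 2) t| ≤ C * t ^ (γ' - m) }

/-- `Q_{α,β} = ∩_{γ'} (P_{α,β} + R_{γ'})` (as functions on `(0,2)`). -/
def Qclass (α β : ℝ) : Set (ℝ → ℝ) :=
  { f | ∀ γ' : ℝ, ∃ p ∈ Pclass α β, ∃ r ∈ Rclass γ',
      ∀ t ∈ Set.Ioo (0 : ℝ) 2, f t = p t + r t }

def Sset : Set ℝ := Set.Ioo (0:ℝ) 2

lemma Sset_open : IsOpen Sset := isOpen_Ioo
lemma Sset_ud : UniqueDiffOn ℝ Sset := Sset_open.uniqueDiffOn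

def Bnd (γ : ℝ) (m : ℕ) (f : ℝ → ℝ) : Prop :=
  ∃ C : ℝ, ∃ ε > (0:ℝ), ∀ t ∈ Set.Ioo (0:ℝ) (min ε 2),
    |iteratedDerivWithin m f Sset t| ≤ C * t ^ (γ - m)

lemma mem_S_of_small {ε t : ℝ} (ht : t ∈ Set.Ioo (0:ℝ) (min ε 2)) : t ∈ Sset :=
  ⟨ht.1, lt_of_lt_of_le ht.2 (min_le_right _ _)⟩

lemma cd_of_top {f : ℝ → ℝ} {s : Set ℝ} (h : ContDiffOn ℝ (⊤:ℕ∞) f s) (m : ℕ) :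
    ContDiffOn ℝ m f s := h.of_le (by exact_mod_cast le_top)

lemma bnd_congr {γ : ℝ} {m : ℕ} {f g : ℝ → ℝ} (hfg : Set.EqOn f g Sset)
    (hf : Bnd γ m f) : Bnd γ m g := by
  obtain ⟨C, ε, hε, hb⟩ := hf
  refine ⟨C, ε, hε, fun t ht => ?_⟩
  rw [← iteratedDerivWithin_congr hfg (mem_S_of_small ht)]
  exact hb t ht

lemma bnd_mono {γ₁ γ₂ : ℝ} {m : ℕ} {f : ℝ → ℝ} (h : γ₂ ≤ γ₁)
    (hf : Bnd γ₁ m f) : Bnd γ₂ m f := by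
  obtain ⟨C, ε, hε, hb⟩ := hf
  refine ⟨C, min ε 1, by positivity, fun t ht => ?_⟩
  obtain ⟨ht0, ht2⟩ := ht
  have htε : t ∈ Set.Ioo (0:ℝ) (min ε 2) := by
    constructor
    · exact ht0
    · exact lt_of_lt_of_le ht2 (by rw [min_assoc]; exact min_le_min le_rfl (min_le_right _ _))
  have ht1 : t ≤ 1 := le_of_lt (lt_of_lt_of_le ht2 (le_trans (min_le_left _ _) (min_le_right _ _)))
  have h1 := hb t htε
  have hC : 0 ≤ C := by
    by_contra hC
    push_neg at hC
    have : C * t ^ (γ₁ - m) < 0 := mul_neg_of_neg_of_pos hC (Real.rpow_pos_of_pos ht0 _)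
    exact absurd (le_trans (abs_nonneg _) h1) (not_le.mpr this)
  refine le_trans h1 (mul_le_mul_of_nonneg_left ?_ hC)
  exact Real.rpow_le_rpow_of_exponent_ge ht0 ht1 (by linarith)

lemma bnd_add {γ : ℝ} {m : ℕ} {f g : ℝ → ℝ}
    (hfc : ContDiffOn ℝ (⊤:ℕ∞) f Sset) (hgc : ContDiffOn ℝ (⊤:ℕ∞) g Sset)
    (hf : Bnd γ m f) (hg : Bnd γ m g) : Bnd γ m (fun t => f t + g t) := by
  obtain ⟨C, ε, hε, hb⟩ := hf
  obtain ⟨C', ε', hε', hb'⟩ := hg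
  refine ⟨C + C', min ε ε', by positivity, fun t ht => ?_⟩
  obtain ⟨ht0, ht2⟩ := ht
  have h1 : t ∈ Set.Ioo (0:ℝ) (min ε 2) :=
    ⟨ht0, lt_of_lt_of_le ht2 (min_le_min (min_le_left _ _) le_rfl)⟩
  have h2 : t ∈ Set.Ioo (0:ℝ) (min ε' 2) :=
    ⟨ht0, lt_of_lt_of_le ht2 (min_le_min (min_le_right _ _) le_rfl)⟩
  have heq : iteratedDerivWithin m (fun t => f t + g t) Sset t =
      iteratedDerivWithin m f Sset t + iteratedDerivWithin m g Sset t := by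
    have := iteratedDerivWithin_add (mem_S_of_small h1) Sset_ud
      ((cd_of_top hfc m) t (mem_S_of_small h1)) ((cd_of_top hgc m) t (mem_S_of_small h1))
    simpa [Pi.add_def] using this
  rw [heq, add_mul]
  exact le_trans (abs_add_le _ _) (add_le_add (hb t h1) (hb' t h2))

lemma bnd_mul_fin {γ₁ γ₂ : ℝ} {m : ℕ} {f g : ℝ → ℝ}
    (hfc : ContDiffOn ℝ (⊤:ℕ∞) f Sset) (hgc : ContDiffOn ℝ (⊤:ℕ∞) g Sset)
    (hf : ∀ i, i ≤ m → Bnd γ₁ i f) (hg : ∀ i, i ≤ m → Bnd γ₂ i g) :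
    Bnd (γ₁ + γ₂) m (fun t => f t * g t) := by
  have Hf : ∀ i : ℕ, ∃ C, ∃ ε > (0:ℝ), i ≤ m → ∀ t ∈ Set.Ioo (0:ℝ) (min ε 2),
      |iteratedDerivWithin i f Sset t| ≤ C * t ^ (γ₁ - i) := by
    intro i
    by_cases h : i ≤ m
    · obtain ⟨C, ε, hε, hb⟩ := hf i h
      exact ⟨C, ε, hε, fun _ => hb⟩
    · exact ⟨0, 1, one_pos, fun h' => absurd h' h⟩
  have Hg : ∀ i : ℕ, ∃ C, ∃ ε > (0:ℝ), i ≤ m → ∀ t ∈ Set.Ioo (0:ℝ) (min ε 2),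
      |iteratedDerivWithin i g Sset t| ≤ C * t ^ (γ₂ - i) := by
    intro i
    by_cases h : i ≤ m
    · obtain ⟨C, ε, hε, hb⟩ := hg i h
      exact ⟨C, ε, hε, fun _ => hb⟩
    · exact ⟨0, 1, one_pos, fun h' => absurd h' h⟩
  choose C1 ε1 hε1 hb1 using Hf
  choose C2 ε2 hε2 hb2 using Hg
  have hne : (Finset.range (m+1)).Nonempty := Finset.nonempty_range_add_one
  set ε0 : ℝ := min ((Finset.range (m+1)).inf' hne ε1) ((Finset.range (m+1)).inf' hne ε2) with hε0def
  have hε0 : 0 < ε0 := by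
    apply lt_min <;> rw [Finset.lt_inf'_iff] <;> intro i _
    exacts [hε1 i, hε2 i]
  refine ⟨∑ i ∈ Finset.range (m+1), (m.choose i : ℝ) * |C1 i| * |C2 (m - i)|, ε0, hε0,
    fun t ht => ?_⟩
  obtain ⟨ht0, ht2⟩ := ht
  have htS : t ∈ Sset := mem_S_of_small ⟨ht0, ht2⟩
  have key : ‖iteratedFDerivWithin ℝ m (fun y => f y * g y) Sset t‖ ≤
      ∑ i ∈ Finset.range (m+1), (m.choose i : ℝ) * ‖iteratedFDerivWithin ℝ i f Sset t‖ *
        ‖iteratedFDerivWithin ℝ (m - i) g Sset t‖ :=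
    norm_iteratedFDerivWithin_mul_le hfc hgc Sset_ud htS (mod_cast le_top)
  have hnorm : |iteratedDerivWithin m (fun t => f t * g t) Sset t| =
      ‖iteratedFDerivWithin ℝ m (fun y => f y * g y) Sset t‖ := by
    rw [norm_iteratedFDerivWithin_eq_norm_iteratedDerivWithin, Real.norm_eq_abs]
  rw [hnorm, Finset.sum_mul]
  refine le_trans key (Finset.sum_le_sum ?_)
  intro i hi
  rw [Finset.mem_range] at hi
  have him : i ≤ m := Nat.lt_succ_iff.mp hi
  have ht1 : t ∈ Set.Ioo (0:ℝ) (min (ε1 i) 2) := by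
    refine ⟨ht0, lt_of_lt_of_le ht2 (min_le_min ?_ le_rfl)⟩
    exact le_trans (min_le_left _ _) (Finset.inf'_le _ (Finset.mem_range.mpr hi))
  have ht2' : t ∈ Set.Ioo (0:ℝ) (min (ε2 (m - i)) 2) := by
    refine ⟨ht0, lt_of_lt_of_le ht2 (min_le_min ?_ le_rfl)⟩
    exact le_trans (min_le_right _ _)
      (Finset.inf'_le _ (Finset.mem_range.mpr (Nat.lt_succ_of_le (Nat.sub_le _ _))))
  have e1 : ‖iteratedFDerivWithin ℝ i f Sset t‖ ≤ |C1 i| * t ^ (γ₁ - i) := by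
    rw [norm_iteratedFDerivWithin_eq_norm_iteratedDerivWithin, Real.norm_eq_abs]
    refine le_trans (hb1 i him t ht1) (mul_le_mul_of_nonneg_right (le_abs_self _) ?_)
    exact le_of_lt (Real.rpow_pos_of_pos ht0 _)
  have e2 : ‖iteratedFDerivWithin ℝ (m - i) g Sset t‖ ≤ |C2 (m - i)| * t ^ (γ₂ - (m - i : ℕ)) := by
    rw [norm_iteratedFDerivWithin_eq_norm_iteratedDerivWithin, Real.norm_eq_abs]
    refine le_trans (hb2 (m - i) (Nat.sub_le _ _) t ht2') (mul_le_mul_of_nonneg_right (le_abs_self _) ?_)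
    exact le_of_lt (Real.rpow_pos_of_pos ht0 _)
  have hprod : t ^ (γ₁ - i) * t ^ (γ₂ - (m - i : ℕ)) = t ^ (γ₁ + γ₂ - m) := by
    rw [← Real.rpow_add ht0]
    congr 1
    rw [Nat.cast_sub him]
    ring
  calc (m.choose i : ℝ) * ‖iteratedFDerivWithin ℝ i f Sset t‖ *
        ‖iteratedFDerivWithin ℝ (m - i) g Sset t‖
      ≤ (m.choose i : ℝ) * (|C1 i| * t ^ (γ₁ - i)) * (|C2 (m - i)| * t ^ (γ₂ - (m - i : ℕ))) := by
        apply mul_le_mul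
        · exact mul_le_mul_of_nonneg_left e1 (by positivity)
        · exact e2
        · exact norm_nonneg _
        · positivity
    _ = (m.choose i : ℝ) * |C1 i| * |C2 (m - i)| * (t ^ (γ₁ - i) * t ^ (γ₂ - (m - i : ℕ))) := by ring
    _ = (m.choose i : ℝ) * |C1 i| * |C2 (m - i)| * t ^ (γ₁ + γ₂ - m) := by rw [hprod]

def Rcl (γ : ℝ) : Set (ℝ → ℝ) :=
  { f | ContDiffOn ℝ (⊤:ℕ∞) f Sset ∧ ∀ m : ℕ, Bnd γ m f }

lemma Rcl_mul {γ₁ γ₂ : ℝ} {f g : ℝ → ℝ} (hf : f ∈ Rcl γ₁) (hg : g ∈ Rcl γ₂) :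
    (fun t => f t * g t) ∈ Rcl (γ₁ + γ₂) := by
  refine ⟨hf.1.mul hg.1, fun m => ?_⟩
  exact bnd_mul_fin hf.1 hg.1 (fun i _ => hf.2 i) (fun i _ => hg.2 i)

lemma Rcl_add {γ : ℝ} {f g : ℝ → ℝ} (hf : f ∈ Rcl γ) (hg : g ∈ Rcl γ) :
    (fun t => f t + g t) ∈ Rcl γ :=
  ⟨hf.1.add hg.1, fun m => bnd_add hf.1 hg.1 (hf.2 m) (hg.2 m)⟩

lemma Rcl_mono {γ₁ γ₂ : ℝ} (h : γ₂ ≤ γ₁) {f : ℝ → ℝ} (hf : f ∈ Rcl γ₁) : f ∈ Rcl γ₂ :=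
  ⟨hf.1, fun m => bnd_mono (by linarith) (hf.2 m)⟩

lemma Rcl_congr {γ : ℝ} {f g : ℝ → ℝ} (hfg : Set.EqOn f g Sset) (hf : f ∈ Rcl γ) :
    g ∈ Rcl γ :=
  ⟨hf.1.congr hfg.symm, fun m => bnd_congr hfg (hf.2 m)⟩

lemma contDiffOn_monomial (c β : ℝ) : ContDiffOn ℝ (⊤:ℕ∞) (fun t : ℝ => c * t ^ β) Sset := by
  refine ContDiffOn.mul contDiffOn_const ?_
  exact ContDiffOn.rpow contDiffOn_id contDiffOn_const (fun x hx => ne_of_gt hx.1)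

lemma iteratedDerivWithin_monomial (c β : ℝ) (m : ℕ) :
    Set.EqOn (iteratedDerivWithin m (fun t : ℝ => c * t ^ β) Sset)
      (fun t => (c * ∏ i ∈ Finset.range m, (β - i)) * t ^ (β - m)) Sset := by
  induction m with
  | zero =>
    intro t ht
    simp [iteratedDerivWithin_zero]
  | succ m IH =>
    intro t ht
    rw [iteratedDerivWithin_succ]
    have hd : derivWithin (iteratedDerivWithin m (fun t : ℝ => c * t ^ β) Sset) Sset t =
        derivWithin (fun t => (c * ∏ i ∈ Finset.range m, (β - i)) * t ^ (β - m)) Sset t :=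
      derivWithin_congr IH (IH ht)
    rw [hd, derivWithin_of_isOpen Sset_open ht]
    have ht0 : (0:ℝ) < t := ht.1
    have hda : HasDerivAt (fun t : ℝ => (c * ∏ i ∈ Finset.range m, (β - i)) * t ^ (β - m))
        ((c * ∏ i ∈ Finset.range m, (β - i)) * ((β - m) * t ^ (β - m - 1))) t :=
      (Real.hasDerivAt_rpow_const (Or.inl (ne_of_gt ht0))).const_mul _
    rw [hda.deriv, Finset.prod_range_succ]
    push_cast
    rw [show β - ((m:ℝ) + 1) = β - (m:ℝ) - 1 by ring]
    ring

lemma Rcl_monomial (c β : ℝ) : (fun t : ℝ => c * t ^ β) ∈ Rcl β := by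
  refine ⟨contDiffOn_monomial c β, fun m => ?_⟩
  refine ⟨|c * ∏ i ∈ Finset.range m, (β - i)|, 1, one_pos, fun t ht => ?_⟩
  rw [iteratedDerivWithin_monomial c β m (mem_S_of_small ht), abs_mul,
    abs_of_pos (Real.rpow_pos_of_pos ht.1 _)]

lemma Rcl_const (c : ℝ) : (fun _ : ℝ => c) ∈ Rcl 0 := by
  refine Rcl_congr (f := fun t : ℝ => c * t ^ (0:ℝ)) ?_ (Rcl_monomial c 0)
  intro t ht
  simp

lemma Rcl_const_mul {γ : ℝ} (c : ℝ) {f : ℝ → ℝ} (hf : f ∈ Rcl γ) :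
    (fun t => c * f t) ∈ Rcl γ := by
  have := Rcl_mul (Rcl_const c) hf
  rwa [zero_add] at this

/-! ### The binomial remainder functions -/

def cc (δ : ℝ) (j : ℕ) : ℝ := ∏ i ∈ Finset.range j, (δ - i)

def rho (δ : ℝ) (N j : ℕ) (x : ℝ) : ℝ :=
  cc δ j * (1 + x) ^ (δ - j) -
    ∑ k ∈ Finset.range (N - j), (cc δ (j + k) / (Nat.factorial k)) * x ^ k

lemma hasDerivAt_rho (δ : ℝ) (N j : ℕ) {x : ℝ} (hx : -1 < x) :
    HasDerivAt (rho δ N j) (rho δ N (j + 1) x) x := by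
  have h1 : (0:ℝ) < 1 + x := by linarith
  have hA : HasDerivAt (fun x : ℝ => cc δ j * (1 + x) ^ (δ - j))
      (cc δ j * (1 * (δ - j) * (1 + x) ^ (δ - j - 1))) x := by
    refine HasDerivAt.const_mul _ ?_
    exact HasDerivAt.rpow_const ((hasDerivAt_id x).const_add 1) (Or.inl (ne_of_gt h1))
  have hB : HasDerivAt
      (fun x : ℝ => ∑ k ∈ Finset.range (N - j), (cc δ (j + k) / (Nat.factorial k)) * x ^ k)
      (∑ k ∈ Finset.range (N - j), (cc δ (j + k) / (Nat.factorial k)) * (k * x ^ (k - 1))) x :=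
    HasDerivAt.fun_sum (fun k _ => (hasDerivAt_pow k x).const_mul _)
  have hD := hA.sub hB
  have heq : cc δ j * (1 * (δ - j) * (1 + x) ^ (δ - j - 1)) -
      ∑ k ∈ Finset.range (N - j), (cc δ (j + k) / (Nat.factorial k)) * (k * x ^ (k - 1)) =
      rho δ N (j + 1) x := by
    have hcc : cc δ (j + 1) = cc δ j * (δ - j) := Finset.prod_range_succ _ _
    have hexp : δ - ((j:ℝ) + 1) = δ - j - 1 := by ring
    unfold rho
    rcases le_or_gt N j with hNj | hNj
    · rw [Nat.sub_eq_zero_of_le hNj, Nat.sub_eq_zero_of_le (le_trans hNj (Nat.le_succ j))]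
      simp only [Finset.range_zero, Finset.sum_empty]
      rw [hcc]
      push_cast
      rw [hexp]
      ring
    · have hsub : N - j = (N - (j + 1)) + 1 := by omega
      rw [hsub, Finset.sum_range_succ']
      have hstep : ∀ k ∈ Finset.range (N - (j + 1)),
          cc δ (j + (k + 1)) / (Nat.factorial (k + 1) : ℝ) * (((k + 1 : ℕ) : ℝ) * x ^ (k + 1 - 1)) =
          cc δ (j + 1 + k) / (Nat.factorial k : ℝ) * x ^ k := by
        intro k _
        have h1 : j + (k + 1) = j + 1 + k := by ring
        have h2 : (Nat.factorial (k + 1) : ℝ) = ((k:ℝ) + 1) * Nat.factorial k := by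
          rw [Nat.factorial_succ]; push_cast; ring
        rw [h1, h2, Nat.add_sub_cancel]
        have hk1 : ((k:ℝ) + 1) ≠ 0 := by positivity
        push_cast
        field_simp
      rw [Finset.sum_congr rfl hstep]
      have hzero : cc δ (j + 0) / (Nat.factorial 0 : ℝ) * (((0:ℕ):ℝ) * x ^ (0 - 1 : ℕ)) = 0 := by
        simp
      rw [hzero, add_zero, hcc]
      push_cast
      rw [hexp]
      ring
  rw [← heq]
  exact hD

lemma rho_zero_eq (δ : ℝ) (N j : ℕ) (hj : j < N) : rho δ N j 0 = 0 := by
  unfold rho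
  have hr : N - j = (N - (j + 1)) + 1 := by omega
  rw [hr, Finset.sum_range_succ']
  have : ∀ k ∈ Finset.range (N - (j + 1)),
      cc δ (j + (k + 1)) / (Nat.factorial (k + 1) : ℝ) * (0:ℝ) ^ (k + 1) = 0 := by
    intro k _
    simp [pow_succ]
  rw [Finset.sum_congr rfl this]
  simp

lemma abs_le_abs_of_uIcc {x y : ℝ} (hy : y ∈ Set.uIcc (0:ℝ) x) : |y| ≤ |x| := by
  rw [Set.uIcc_eq_union] at hy
  rcases hy with hy | hy <;> rw [Set.mem_Icc] at hy
  · rw [abs_of_nonneg hy.1]; exact le_trans hy.2 (le_abs_self x)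
  · rw [abs_of_nonpos hy.2]; linarith [neg_abs_le x, hy.1]

lemma rho_bound (δ : ℝ) (N : ℕ) (j : ℕ) :
    ∃ K ≥ (0:ℝ), ∀ x : ℝ, |x| ≤ 1/2 → |rho δ N j x| ≤ K * |x| ^ (N - j) := by
  have main : ∀ d : ℕ, ∀ j : ℕ, N - j = d →
      ∃ K ≥ (0:ℝ), ∀ x : ℝ, |x| ≤ 1/2 → |rho δ N j x| ≤ K * |x| ^ (N - j) := by
    intro d
    induction d with
    | zero =>
      intro j hj
      refine ⟨|cc δ j| * ((1/2:ℝ) ^ (δ - j) + (3/2:ℝ) ^ (δ - j)), by positivity, fun x hx => ?_⟩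
      rw [hj, pow_zero, mul_one]
      have hx1 : (1/2:ℝ) ≤ 1 + x := by
        rcases abs_le.mp hx with ⟨h1, _⟩; linarith
      have hx2 : 1 + x ≤ 3/2 := by
        rcases abs_le.mp hx with ⟨_, h2⟩; linarith
      have hb : (1 + x) ^ (δ - j) ≤ (1/2:ℝ) ^ (δ - j) + (3/2:ℝ) ^ (δ - j) := by
        rcases le_or_gt 0 (δ - j) with hp | hp
        · have := Real.rpow_le_rpow (by linarith) hx2 hp
          have h0 : (0:ℝ) ≤ (1/2:ℝ) ^ (δ - (j:ℝ)) := by positivity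
          linarith
        · have := Real.rpow_le_rpow_of_nonpos (by norm_num) hx1 (le_of_lt hp)
          have h0 : (0:ℝ) ≤ (3/2:ℝ) ^ (δ - (j:ℝ)) := by positivity
          linarith
      unfold rho
      rw [hj]
      simp only [Finset.range_zero, Finset.sum_empty, sub_zero]
      rw [abs_mul]
      have hpos : (0:ℝ) < 1 + x := by linarith
      rw [abs_of_pos (Real.rpow_pos_of_pos hpos _)]
      exact mul_le_mul_of_nonneg_left hb (abs_nonneg _)
    | succ d IH =>
      intro j hj
      have hjN : j < N := by omega
      obtain ⟨K, hK, hKb⟩ := IH (j + 1) (by omega)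
      refine ⟨K, hK, fun x hx => ?_⟩
      have hderiv : ∀ y ∈ Set.uIcc (0:ℝ) x,
          HasDerivWithinAt (rho δ N j) (rho δ N (j + 1) y) (Set.uIcc (0:ℝ) x) y := by
        intro y hy
        have hyx : |y| ≤ |x| := abs_le_abs_of_uIcc hy
        have hy2 : |y| ≤ 1/2 := le_trans hyx hx
        have : (-1:ℝ) < y := by
          rcases abs_le.mp hy2 with ⟨h1, _⟩; linarith
        exact (hasDerivAt_rho δ N j this).hasDerivWithinAt
      have hbound : ∀ y ∈ Set.uIcc (0:ℝ) x, ‖rho δ N (j + 1) y‖ ≤ K * |x| ^ d := by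
        intro y hy
        have hyx : |y| ≤ |x| := abs_le_abs_of_uIcc hy
        have hy2 : |y| ≤ 1/2 := le_trans hyx hx
        have := hKb y hy2
        rw [Real.norm_eq_abs]
        refine le_trans this (mul_le_mul_of_nonneg_left ?_ hK)
        have : N - (j + 1) = d := by omega
        rw [this]
        exact pow_le_pow_left₀ (abs_nonneg _) hyx d
      have hmvt := Convex.norm_image_sub_le_of_norm_hasDerivWithin_le hderiv hbound
        (convex_uIcc _ _) (Set.left_mem_uIcc) (Set.right_mem_uIcc)
      rw [rho_zero_eq δ N j hjN, sub_zero, Real.norm_eq_abs, Real.norm_eq_abs, sub_zero] at hmvt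
      have : N - j = d + 1 := hj
      rw [this, pow_succ]
      calc |rho δ N j x| ≤ K * |x| ^ d * |x| := hmvt
        _ = K * (|x| ^ d * |x|) := by ring
  exact main (N - j) j rfl

lemma bnd_derivWithin {γ : ℝ} {i : ℕ} {u : ℝ → ℝ} (h : Bnd γ (i+1) u) :
    Bnd (γ - 1) i (derivWithin u Sset) := by
  obtain ⟨C, ε, hε, hb⟩ := h
  refine ⟨C, ε, hε, fun t ht => ?_⟩
  rw [← iteratedDerivWithin_succ']
  have := hb t ht
  have hcast : γ - ((i+1:ℕ):ℝ) = (γ - 1) - i := by push_cast; ring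
  rwa [hcast] at this

lemma bnd_of_succ {γ : ℝ} {m : ℕ} {F G : ℝ → ℝ}
    (heq : Set.EqOn (derivWithin F Sset) G Sset)
    (h : Bnd (γ - 1) m G) : Bnd γ (m+1) F := by
  obtain ⟨C, ε, hε, hb⟩ := h
  refine ⟨C, ε, hε, fun t ht => ?_⟩
  have htS := mem_S_of_small ht
  rw [iteratedDerivWithin_succ',
      iteratedDerivWithin_congr heq htS]
  have hcast : γ - ((m+1:ℕ):ℝ) = (γ - 1) - m := by push_cast; ring
  rw [hcast]
  exact hb t ht

lemma rho_comp_smooth (δ : ℝ) (N j : ℕ) {u : ℝ → ℝ} (hu : ContDiffOn ℝ (⊤:ℕ∞) u Sset)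
    (hpos : ∀ t ∈ Sset, -1 < u t) :
    ContDiffOn ℝ (⊤:ℕ∞) (fun t => rho δ N j (u t)) Sset := by
  unfold rho
  apply ContDiffOn.sub
  · apply ContDiffOn.mul contDiffOn_const
    exact ContDiffOn.rpow (contDiffOn_const.add hu) contDiffOn_const
      (fun t ht => ne_of_gt (by linarith [hpos t ht]))
  · apply ContDiffOn.sum
    intro k _
    exact ContDiffOn.mul contDiffOn_const (hu.pow k)

lemma derivWithin_u_smooth {u : ℝ → ℝ} (hu : ContDiffOn ℝ (⊤:ℕ∞) u Sset) :
    ContDiffOn ℝ (⊤:ℕ∞) (derivWithin u Sset) Sset := by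
  have := hu.derivWithin Sset_ud (m := (⊤:ℕ∞)) (by exact_mod_cast le_top)
  exact this

lemma rho_comp_deriv_eq (δ : ℝ) (N j : ℕ) {u : ℝ → ℝ} (hu : ContDiffOn ℝ (⊤:ℕ∞) u Sset)
    (hpos : ∀ t ∈ Sset, -1 < u t) :
    Set.EqOn (derivWithin (fun t => rho δ N j (u t)) Sset)
      (fun t => rho δ N (j+1) (u t) * derivWithin u Sset t) Sset := by
  intro x hx
  have hdu : HasDerivAt u (derivWithin u Sset x) x := by
    have h1 : DifferentiableAt ℝ u x :=
      (hu.contDiffAt (Sset_open.mem_nhds hx)).differentiableAt (by simp)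
    rw [derivWithin_of_isOpen Sset_open hx]
    exact h1.hasDerivAt
  have hcomp : HasDerivAt (fun t => rho δ N j (u t))
      (rho δ N (j+1) (u x) * derivWithin u Sset x) x :=
    HasDerivAt.comp x (hasDerivAt_rho δ N j (hpos x hx)) hdu
  rw [derivWithin_of_isOpen Sset_open hx, hcomp.deriv]

lemma rho_comp_bnd (δ σ : ℝ) (hσ : 0 < σ) (N : ℕ) {u : ℝ → ℝ}
    (hu : ContDiffOn ℝ (⊤:ℕ∞) u Sset) (hpos : ∀ t ∈ Sset, -1 < u t)
    (hub : ∀ m, Bnd σ m u) :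
    ∀ m j, Bnd (((N - j : ℕ):ℝ) * σ) m (fun t => rho δ N j (u t)) := by
  intro m
  induction m using Nat.strong_induction_on with
  | _ m IH =>
    intro j
    match m with
    | 0 =>
      obtain ⟨K, hK, hKb⟩ := rho_bound δ N j
      obtain ⟨Cu, εu, hεu, hbu⟩ := hub 0
      set ε1 : ℝ := min εu (min 1 ((1/(2*(|Cu|+1))) ^ (1/σ))) with hε1def
      have hε1 : 0 < ε1 := by
        apply lt_min hεu
        apply lt_min one_pos
        positivity
      refine ⟨K * |Cu| ^ (N - j), ε1, hε1, fun t ht => ?_⟩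
      obtain ⟨ht0, ht2⟩ := ht
      have htu : t ∈ Set.Ioo (0:ℝ) (min εu 2) :=
        ⟨ht0, lt_of_lt_of_le ht2 (min_le_min (min_le_left _ _) le_rfl)⟩
      have hut : |u t| ≤ |Cu| * t ^ σ := by
        have := hbu t htu
        rw [iteratedDerivWithin_zero] at this
        simp only [Nat.cast_zero, sub_zero] at this
        exact le_trans this (mul_le_mul_of_nonneg_right (le_abs_self _)
          (le_of_lt (Real.rpow_pos_of_pos ht0 _)))
      have htsmall : |Cu| * t ^ σ ≤ 1/2 := by
        have h1 : t < (1/(2*(|Cu|+1))) ^ (1/σ) :=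
          lt_of_lt_of_le ht2 (le_trans (min_le_left _ _)
            (le_trans (min_le_right _ _) (min_le_right _ _)))
        have h2 : t ^ σ ≤ ((1/(2*(|Cu|+1))) ^ (1/σ)) ^ σ :=
          Real.rpow_le_rpow (le_of_lt ht0) (le_of_lt h1) (le_of_lt hσ)
        have h3 : ((1/(2*(|Cu|+1))) ^ (1/σ) : ℝ) ^ σ = 1/(2*(|Cu|+1)) := by
          rw [← Real.rpow_mul (by positivity), one_div_mul_cancel (ne_of_gt hσ), Real.rpow_one]
        have h4 : 1/(2*(|Cu|+1)) * |Cu| ≤ 1/2 := by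
          rw [div_mul_eq_mul_div, one_mul]
          rw [div_le_div_iff₀ (by positivity) (by norm_num)]
          nlinarith [abs_nonneg Cu]
        calc |Cu| * t ^ σ ≤ |Cu| * (1/(2*(|Cu|+1))) := by
              refine mul_le_mul_of_nonneg_left ?_ (abs_nonneg _)
              rw [← h3]; exact h2
          _ = 1/(2*(|Cu|+1)) * |Cu| := by ring
          _ ≤ 1/2 := h4
      have huhalf : |u t| ≤ 1/2 := le_trans hut htsmall
      have hrho := hKb (u t) huhalf
      rw [iteratedDerivWithin_zero]
      refine le_trans hrho ?_
      have hpow : |u t| ^ (N - j) ≤ (|Cu| * t ^ σ) ^ (N - j) :=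
        pow_le_pow_left₀ (abs_nonneg _) hut _
      have hexpand : (|Cu| * t ^ σ) ^ (N - j) = |Cu| ^ (N - j) * t ^ (((N - j:ℕ):ℝ) * σ) := by
        rw [mul_pow]
        congr 1
        rw [← Real.rpow_natCast (t ^ σ) (N - j), ← Real.rpow_mul (le_of_lt ht0)]
        congr 1
        ring
      have : K * |u t| ^ (N - j) ≤ K * (|Cu| ^ (N - j) * t ^ (((N - j:ℕ):ℝ) * σ)) := by
        rw [← hexpand]
        exact mul_le_mul_of_nonneg_left hpow hK
      refine le_trans this (le_of_eq ?_)
      simp only [Nat.cast_zero, sub_zero]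
      ring
    | (m+1) =>
      have heq := rho_comp_deriv_eq δ N j hu hpos
      have hf : ∀ i, i ≤ m → Bnd (((N - (j+1) : ℕ):ℝ) * σ) i (fun t => rho δ N (j+1) (u t)) :=
        fun i hi => IH i (Nat.lt_succ_of_le hi) (j+1)
      have hg : ∀ i, i ≤ m → Bnd (σ - 1) i (derivWithin u Sset) :=
        fun i _ => bnd_derivWithin (hub (i+1))
      have hprod : Bnd (((N - (j+1) : ℕ):ℝ) * σ + (σ - 1)) m
          (fun t => rho δ N (j+1) (u t) * derivWithin u Sset t) :=
        bnd_mul_fin (rho_comp_smooth δ N (j+1) hu hpos) (derivWithin_u_smooth hu) hf hg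
      have hstep : Bnd (((N - (j+1) : ℕ):ℝ) * σ + σ) (m+1) (fun t => rho δ N j (u t)) := by
        apply bnd_of_succ heq
        have : ((N - (j+1) : ℕ):ℝ) * σ + σ - 1 = ((N - (j+1) : ℕ):ℝ) * σ + (σ - 1) := by ring
        rw [this]
        exact hprod
      refine bnd_mono ?_ hstep
      rcases le_or_gt N j with hNj | hNj
      · rw [Nat.sub_eq_zero_of_le hNj]
        have : N - (j+1) = 0 := by omega
        rw [this]
        simp
        linarith
      · have : N - j = (N - (j+1)) + 1 := by omega
        rw [this]
        push_cast
        ring_nf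
        exact le_refl _

lemma Rcl_zero (γ : ℝ) : (fun _ : ℝ => (0:ℝ)) ∈ Rcl γ := by
  refine Rcl_congr (f := fun t : ℝ => 0 * t ^ γ) ?_ (Rcl_monomial 0 γ)
  intro t _
  simp

lemma Rcl_sum {γ : ℝ} {ι : Type*} (s : Finset ι) (F : ι → ℝ → ℝ)
    (h : ∀ i ∈ s, F i ∈ Rcl γ) : (fun t => ∑ i ∈ s, F i t) ∈ Rcl γ := by
  induction s using Finset.cons_induction with
  | empty => simpa using Rcl_zero γ
  | cons a s ha IH =>
    have h2 := Rcl_add (h a (Finset.mem_cons_self a s))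
      (IH (fun i hi => h i (Finset.mem_cons_of_mem hi)))
    refine Rcl_congr (f := fun t => F a t + ∑ i ∈ s, F i t) ?_ h2
    intro t _
    simp [Finset.sum_cons]

def Pos : Set (ℝ → ℝ) :=
  { f | ∃ (n : ℕ) (c : Fin n → ℝ) (e : Fin n → ℝ),
      (∀ i, 0 < e i) ∧ ∀ t ∈ Sset, f t = ∑ i, c i * t ^ (e i) }

lemma Pos_congr {f g : ℝ → ℝ} (hfg : Set.EqOn f g Sset) (hf : f ∈ Pos) : g ∈ Pos := by
  obtain ⟨n, c, e, he, hsum⟩ := hf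
  exact ⟨n, c, e, he, fun t ht => (hfg ht).symm ▸ hsum t ht⟩

lemma Pos_monomial (c : ℝ) {e : ℝ} (he : 0 < e) : (fun t : ℝ => c * t ^ e) ∈ Pos :=
  ⟨1, fun _ => c, fun _ => e, fun _ => he, fun t _ => by simp⟩

lemma Pos_zero : (fun _ : ℝ => (0:ℝ)) ∈ Pos :=
  ⟨0, Fin.elim0, Fin.elim0, fun i => i.elim0, fun t _ => by simp⟩

lemma Pos_add {f g : ℝ → ℝ} (hf : f ∈ Pos) (hg : g ∈ Pos) :
    (fun t => f t + g t) ∈ Pos := by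
  obtain ⟨n1, c1, e1, he1, hs1⟩ := hf
  obtain ⟨n2, c2, e2, he2, hs2⟩ := hg
  refine ⟨n1 + n2, Fin.append c1 c2, Fin.append e1 e2, ?_, ?_⟩
  · intro i
    rcases lt_or_ge (i : ℕ) n1 with h | h
    · have : i = Fin.castAdd n2 ⟨i, h⟩ := by ext; simp
      rw [this, Fin.append_left]
      exact he1 _
    · have : i = Fin.natAdd n1 ⟨i - n1, by omega⟩ := by ext; simp; omega
      rw [this, Fin.append_right]
      exact he2 _
  · intro t ht
    rw [Fin.sum_univ_add]
    simp only [Fin.append_left, Fin.append_right]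
    rw [← hs1 t ht, ← hs2 t ht]

lemma Pos_mul {f g : ℝ → ℝ} (hf : f ∈ Pos) (hg : g ∈ Pos) :
    (fun t => f t * g t) ∈ Pos := by
  obtain ⟨n1, c1, e1, he1, hs1⟩ := hf
  obtain ⟨n2, c2, e2, he2, hs2⟩ := hg
  refine ⟨n1 * n2,
    fun k => c1 (finProdFinEquiv.symm k).1 * c2 (finProdFinEquiv.symm k).2,
    fun k => e1 (finProdFinEquiv.symm k).1 + e2 (finProdFinEquiv.symm k).2,
    fun k => add_pos (he1 _) (he2 _), ?_⟩
  intro t ht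
  have ht0 : (0:ℝ) < t := ht.1
  simp only []
  rw [hs1 t ht, hs2 t ht, Finset.sum_mul_sum]
  have hcomp := Equiv.sum_comp finProdFinEquiv.symm
    (fun p : Fin n1 × Fin n2 => c1 p.1 * c2 p.2 * t ^ (e1 p.1 + e2 p.2))
  rw [hcomp, Fintype.sum_prod_type]
  apply Finset.sum_congr rfl
  intro i _
  apply Finset.sum_congr rfl
  intro j _
  rw [Real.rpow_add ht0]
  ring

lemma Pos_const_mul (c : ℝ) {f : ℝ → ℝ} (hf : f ∈ Pos) : (fun t => c * f t) ∈ Pos := by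
  obtain ⟨n, c1, e1, he1, hs1⟩ := hf
  refine ⟨n, fun i => c * c1 i, e1, he1, fun t ht => ?_⟩
  simp only []
  rw [hs1 t ht, Finset.mul_sum]
  simp [mul_assoc]

lemma Pos_pow {f : ℝ → ℝ} (hf : f ∈ Pos) (k : ℕ) (hk : 1 ≤ k) :
    (fun t => (f t) ^ k) ∈ Pos := by
  induction k with
  | zero => omega
  | succ k IH =>
    rcases Nat.eq_or_lt_of_le hk with h | h
    · refine Pos_congr (f := f) ?_ hf
      intro t _
      rw [← h]
      simp
    · have hk1 : 1 ≤ k := by omega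
      have := Pos_mul (IH hk1) hf
      refine Pos_congr ?_ this
      intro t _
      simp only []
      rw [pow_succ]

lemma Pos_sum {ι : Type*} (s : Finset ι) (F : ι → ℝ → ℝ)
    (h : ∀ i ∈ s, F i ∈ Pos) : (fun t => ∑ i ∈ s, F i t) ∈ Pos := by
  induction s using Finset.cons_induction with
  | empty => simpa using Pos_zero
  | cons a s ha IH =>
    have h2 := Pos_add (h a (Finset.mem_cons_self a s))
      (IH (fun i hi => h i (Finset.mem_cons_of_mem hi)))
    refine Pos_congr (f := fun t => F a t + ∑ i ∈ s, F i t) ?_ h2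
    intro t _
    simp [Finset.sum_cons]

lemma Rcl_pow0 {f : ℝ → ℝ} (hf : f ∈ Rcl 0) (k : ℕ) : (fun t => (f t) ^ k) ∈ Rcl 0 := by
  induction k with
  | zero => exact Rcl_congr (f := fun _ : ℝ => (1:ℝ)) (fun t _ => by simp) (Rcl_const 1)
  | succ k IH =>
    have := Rcl_mul IH hf
    rw [add_zero] at this
    exact Rcl_congr (f := fun t => f t ^ k * f t) (fun t _ => (pow_succ (f t) k).symm) this

lemma Rcl_eq_Rclass (γ : ℝ) : Rcl γ = Rclass γ := rfl

lemma Pos_to_Pclass {β : ℝ} (hβ : 0 < β) (Cst : ℝ) {s : ℝ → ℝ} (hs : s ∈ Pos) :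
    (fun t => Cst * (t ^ β * s t)) ∈ Pclass β β := by
  obtain ⟨n, c, e, he, hsum⟩ := hs
  refine ⟨n, fun i => Cst * c i, fun i => β + e i,
    fun i _ => by show β < β + e i; linarith [he i],
    fun i _ => by show β < β + e i; linarith [he i], ?_⟩
  intro t ht
  have ht0 : (0:ℝ) < t := ht.1
  simp only []
  rw [hsum t ht, Finset.mul_sum, Finset.mul_sum]
  apply Finset.sum_congr rfl
  intro i _
  rw [Real.rpow_add ht0]
  ring

/-- composition with a power: if `g₁(t) = a t^α + Q_{α,α}(t)` is positive on
`(0,2)`, then `g₁(t)^δ = a^δ t^{αδ} + Q_{αδ,αδ}(t)`. -/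
theorem Qclass_rpow (a α δ : ℝ) (ha : 0 < a) (hα : 0 < α) (hδ : 0 < δ)
    (g₁ q : ℝ → ℝ) (hpos : ∀ t ∈ Set.Ioo (0 : ℝ) 2, 0 < g₁ t)
    (hq : q ∈ Qclass α α)
    (hg₁ : ∀ t ∈ Set.Ioo (0 : ℝ) 2, g₁ t = a * t ^ α + q t) :
    (fun t : ℝ => g₁ t ^ δ - a ^ δ * t ^ (α * δ)) ∈ Qclass (α * δ) (α * δ) := by
  intro Γ
  set A : ℝ := α * δ with hAdef
  have hA : 0 < A := mul_pos hα hδ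
  -- get the decomposition of q at a high order
  set γ'' : ℝ := max (Γ + α) (α + 1) with hγ''def
  have hγ''1 : Γ + α ≤ γ'' := le_max_left _ _
  have hγ''2 : α + 1 ≤ γ'' := le_max_right _ _
  obtain ⟨pq, hpq, rq, hrq, hdecomp⟩ := hq γ''
  obtain ⟨n, ac, ee, hint, hnint, hsumq⟩ := hpq
  have hee : ∀ i, α < ee i := by
    intro i
    by_cases h : ∃ z : ℤ, ee i = (z : ℝ)
    · exact hint i h
    · exact hnint i h
  -- get a uniform lower bound σ
  have hσv : ∃ σv : ℝ, 0 < σv ∧ σv ≤ 1 ∧ ∀ i, σv ≤ ee i - α := by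
    rcases Nat.eq_zero_or_pos n with hn | hn
    · subst hn
      exact ⟨1, one_pos, le_rfl, fun i => i.elim0⟩
    · have hne : (Finset.univ : Finset (Fin n)).Nonempty := by
        rw [Finset.univ_nonempty_iff]
        exact Fin.pos_iff_nonempty.mp hn
      refine ⟨min 1 (Finset.univ.inf' hne (fun i => ee i - α)), ?_, min_le_left _ _, ?_⟩
      · apply lt_min one_pos
        rw [Finset.lt_inf'_iff]
        intro i _
        linarith [hee i]
      · intro i
        exact le_trans (min_le_right _ _) (Finset.inf'_le _ (Finset.mem_univ i))
  obtain ⟨σv, hσv0, hσv1, hσvle⟩ := hσv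
  set σ : ℝ := min σv (γ'' - α) with hσdef
  have hσ : 0 < σ := lt_min hσv0 (by linarith)
  have hσ1 : σ ≤ 1 := le_trans (min_le_left _ _) hσv1
  have hσγ : σ ≤ γ'' - α := min_le_right _ _
  -- define v, w, u
  set v : ℝ → ℝ := fun t => ∑ i, (ac i / a) * t ^ (ee i - α) with hvdef
  set w : ℝ → ℝ := fun t => (1/a) * (rq t * t ^ (-α)) with hwdef
  set u : ℝ → ℝ := fun t => v t + w t with hudef
  have hrq' : rq ∈ Rcl γ'' := by rw [Rcl_eq_Rclass]; exact hrq
  have hv : v ∈ Rcl σ := by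
    apply Rcl_sum
    intro i _
    exact Rcl_mono (le_trans (min_le_left _ _) (hσvle i)) (Rcl_monomial _ _)
  have hw : w ∈ Rcl (γ'' - α) := by
    have h1 : (fun t : ℝ => (1:ℝ) * t ^ (-α)) ∈ Rcl (-α) := Rcl_monomial 1 (-α)
    have h2 := Rcl_mul hrq' h1
    have h3 := Rcl_const_mul (1/a) h2
    refine Rcl_congr ?_ h3
    intro t _
    simp [hwdef]
  have hwσ : w ∈ Rcl σ := Rcl_mono (by linarith) hw
  have hu : u ∈ Rcl σ := Rcl_add hv hwσ
  -- pointwise identities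
  have hvw : ∀ t ∈ Sset, a * t ^ α * v t = pq t ∧ a * t ^ α * w t = rq t := by
    intro t ht
    have ht0 : (0:ℝ) < t := ht.1
    have htα : (0:ℝ) < t ^ α := Real.rpow_pos_of_pos ht0 α
    constructor
    · rw [hsumq t ht, hvdef]
      simp only []
      rw [Finset.mul_sum]
      apply Finset.sum_congr rfl
      intro i _
      rw [Real.rpow_sub ht0]
      field_simp
    · simp only [hwdef]
      rw [Real.rpow_neg (le_of_lt ht0)]
      field_simp
  have hg₁u : ∀ t ∈ Sset, g₁ t = a * t ^ α * (1 + u t) := by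
    intro t ht
    obtain ⟨h1, h2⟩ := hvw t ht
    rw [hg₁ t ht, hdecomp t ht, hudef]
    simp only []
    rw [mul_add, mul_one, mul_add, h1, h2]
  have hu_gt : ∀ t ∈ Sset, -1 < u t := by
    intro t ht
    have ht0 : (0:ℝ) < t := ht.1
    have htα : (0:ℝ) < a * t ^ α := mul_pos ha (Real.rpow_pos_of_pos ht0 α)
    have := hpos t ht
    rw [hg₁u t ht] at this
    nlinarith
  -- choose N
  obtain ⟨N₀, hN₀⟩ := exists_nat_ge ((Γ - A)/σ)
  set N : ℕ := N₀ + 1 with hNdef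
  have hNσ : Γ ≤ A + N * σ := by
    have h1 : Γ - A ≤ N₀ * σ := by
      rw [div_le_iff₀ hσ] at hN₀
      linarith
    have : (N:ℝ) = N₀ + 1 := by push_cast [hNdef]; ring
    nlinarith
  -- the principal part
  set sum1 : ℝ → ℝ := fun t => ∑ k ∈ Finset.Ico 1 N, (cc δ k / (Nat.factorial k)) * (v t)^k
    with hs1def
  have hvPos : v ∈ Pos :=
    ⟨n, fun i => ac i / a, fun i => ee i - α, fun i => by show 0 < ee i - α; linarith [hee i], fun t _ => rfl⟩
  have hsum1Pos : sum1 ∈ Pos := by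
    apply Pos_sum
    intro k hk
    have hk1 : 1 ≤ k := (Finset.mem_Ico.mp hk).1
    exact Pos_const_mul _ (Pos_pow hvPos k hk1)
  set p : ℝ → ℝ := fun t => a ^ δ * (t ^ A * sum1 t) with hpdef
  have hp : p ∈ Pclass A A := Pos_to_Pclass hA _ hsum1Pos
  -- remainder part 1
  have hdiff : ∀ k : ℕ, (fun t => (u t)^k - (v t)^k) ∈ Rcl (γ'' - α) := by
    intro k
    induction k with
    | zero => exact Rcl_congr (f := fun _ : ℝ => (0:ℝ)) (fun t _ => by simp) (Rcl_zero _)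
    | succ k IH =>
      have hu0 : u ∈ Rcl 0 := Rcl_mono (le_of_lt hσ) hu
      have hv0 : v ∈ Rcl 0 := Rcl_mono (le_of_lt hσ) hv
      have hvk : (fun t => (v t)^k) ∈ Rcl 0 := Rcl_pow0 hv0 k
      have t1 := Rcl_mul hu0 IH
      have t2 := Rcl_mul hw hvk
      rw [zero_add] at t1
      rw [add_zero] at t2
      have t3 := Rcl_add t1 t2
      refine Rcl_congr ?_ t3
      intro t _
      simp only []
      have hwu : w t = u t - v t := by rw [hudef]; ring
      rw [hwu]
      ring
  set S2 : ℝ → ℝ := fun t => ∑ k ∈ Finset.Ico 1 N,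
      (cc δ k / (Nat.factorial k)) * ((u t)^k - (v t)^k) with hS2def
  have hS2 : S2 ∈ Rcl (γ'' - α) := by
    apply Rcl_sum
    intro k _
    exact Rcl_const_mul _ (hdiff k)
  set r1 : ℝ → ℝ := fun t => a ^ δ * (t ^ A * S2 t) with hr1def
  have hr1 : r1 ∈ Rcl Γ := by
    have h1 := Rcl_const_mul (a^δ) (Rcl_mul (Rcl_monomial 1 A) hS2)
    have h2 : r1 ∈ Rcl (A + (γ'' - α)) := by
      refine Rcl_congr ?_ h1
      intro t _
      rw [hr1def]
      ring
    exact Rcl_mono (by linarith) h2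
  -- remainder part 2
  have hrho0 : (fun t => rho δ N 0 (u t)) ∈ Rcl ((N:ℝ) * σ) := by
    refine ⟨rho_comp_smooth δ N 0 hu.1 hu_gt, fun m => ?_⟩
    have := rho_comp_bnd δ σ hσ N hu.1 hu_gt hu.2 m 0
    simpa using this
  set r2 : ℝ → ℝ := fun t => a ^ δ * (t ^ A * rho δ N 0 (u t)) with hr2def
  have hr2 : r2 ∈ Rcl Γ := by
    have h1 := Rcl_const_mul (a^δ) (Rcl_mul (Rcl_monomial 1 A) hrho0)
    have h2 : r2 ∈ Rcl (A + (N:ℝ) * σ) := by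
      refine Rcl_congr ?_ h1
      intro t _
      rw [hr2def]
      ring
    exact Rcl_mono hNσ h2
  have hr : (fun t => r1 t + r2 t) ∈ Rclass Γ := by
    rw [← Rcl_eq_Rclass]
    exact Rcl_add hr1 hr2
  refine ⟨p, hp, fun t => r1 t + r2 t, hr, ?_⟩
  intro t ht
  have ht0 : (0:ℝ) < t := ht.1
  have htα : (0:ℝ) < t ^ α := Real.rpow_pos_of_pos ht0 α
  have haα : (0:ℝ) < a * t ^ α := mul_pos ha htα
  have hg := hpos t ht
  rw [hg₁u t ht] at hg
  have h1u : (0:ℝ) < 1 + u t := by nlinarith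
  have hrpow : g₁ t ^ δ = a ^ δ * t ^ A * (1 + u t) ^ δ := by
    rw [hg₁u t ht, Real.mul_rpow (le_of_lt haα) (le_of_lt h1u),
      Real.mul_rpow (le_of_lt ha) (le_of_lt htα), ← Real.rpow_mul (le_of_lt ht0)]
  have hbinom : (1 + u t) ^ δ =
      (∑ k ∈ Finset.range N, (cc δ (0 + k) / (Nat.factorial k : ℝ)) * (u t)^k)
        + rho δ N 0 (u t) := by
    have hcc0 : cc δ 0 = 1 := Finset.prod_range_zero _
    unfold rho
    rw [hcc0, Nat.sub_zero, Nat.cast_zero, sub_zero, one_mul]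
    ring
  have hsplit : (∑ k ∈ Finset.range N, (cc δ (0 + k) / (Nat.factorial k : ℝ)) * (u t)^k) =
      1 + ∑ k ∈ Finset.Ico 1 N, (cc δ (0 + k) / (Nat.factorial k : ℝ)) * (u t)^k := by
    rw [Finset.range_eq_Ico, Finset.sum_eq_sum_Ico_succ_bot (by omega : 0 < N)]
    congr 1
    simp [cc]
  have hsumeq : (∑ k ∈ Finset.Ico 1 N, (cc δ (0 + k) / (Nat.factorial k : ℝ)) * (u t)^k) =
      sum1 t + S2 t := by
    rw [hs1def, hS2def]
    simp only []
    rw [← Finset.sum_add_distrib]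
    apply Finset.sum_congr rfl
    intro k _
    rw [zero_add]
    ring
  show g₁ t ^ δ - a ^ δ * t ^ A = p t + (r1 t + r2 t)
  rw [hrpow, hbinom, hsplit, hsumeq, hpdef, hr1def, hr2def]
  ring
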